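/- arXiv:1803.02888 — 3 statements merged into one kernel-verified Lean document; each statement's English description precedes it below -/
import Mathlib

section
/- For every odd integer k ≥ 3 and every odd integer n ≥ k+2, there exists a connected simple graph on n vertices in which exactly one vertex has degree k-1 and all other n-1 vertices have degree k. -/
open SimpleGraph Finset

namespace NearReg

def D (m h : ℕ) (x : ZMod (2*h+1)) : Finset ℕ :=
  (Finset.Icc 1 m ∪ Finset.Icc (2*h+1-m) (2*h)) ∪
    (if x.val ∈ Finset.Icc 1 h then {h} else if x.val = 0 then ∅ else {h+1})

variable {m h : ℕ}

lemma mem_D_iff (hm : 1 ≤ m) (hmh : m + 1 ≤ h) {x : ZMod (2*h+1)} {t : ℕ} :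
    t ∈ D m h x ↔ (1 ≤ t ∧ t ≤ m) ∨ (2*h+1-m ≤ t ∧ t ≤ 2*h)
      ∨ (t = h ∧ 1 ≤ x.val ∧ x.val ≤ h) ∨ (t = h+1 ∧ h+1 ≤ x.val) := by
  have hx := ZMod.val_lt x
  simp only [D, Finset.mem_union, Finset.mem_Icc]
  generalize x.val = v at hx ⊢
  split_ifs with h1 h2 <;>
    simp only [Finset.mem_Icc, Finset.mem_singleton, Finset.notMem_empty, or_false,
      false_or] at h1 ⊢ <;> omega

lemma symm_key (hm : 1 ≤ m) (hmh : m + 1 ≤ h) {x y : ZMod (2*h+1)}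
    (hxy : (y - x).val ∈ D m h x) : (x - y).val ∈ D m h y := by
  have hx := ZMod.val_lt x
  have hy := ZMod.val_lt y
  set t := (y - x).val with ht
  have hb := (mem_D_iff hm hmh).mp hxy
  have ht1 : 1 ≤ t ∧ t ≤ 2*h := by omega
  have hne : y - x ≠ 0 := by
    intro h0
    rw [h0, ZMod.val_zero] at ht
    omega
  haveI : NeZero (y - x) := ⟨hne⟩
  have hs : (x - y).val = 2*h+1 - t := by
    rw [show x - y = -(y - x) by ring, ZMod.val_neg_of_ne_zero]
  have hyval : y.val = (x.val + t) % (2*h+1) := by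
    conv_lhs => rw [show y = x + (y - x) by ring]
    rw [ZMod.val_add]
  have hcase : y.val = x.val + t ∨ y.val + (2*h+1) = x.val + t := by
    rcases Nat.lt_or_ge (x.val + t) (2*h+1) with hlt | hge
    · left; rw [hyval, Nat.mod_eq_of_lt hlt]
    · right
      rw [hyval, Nat.mod_eq_sub_mod hge, Nat.mod_eq_of_lt (by omega)]
      omega
  rw [mem_D_iff hm hmh, hs]
  omega

def G (hm : 1 ≤ m) (hmh : m + 1 ≤ h) : SimpleGraph (ZMod (2*h+1)) where
  Adj x y := (y - x).val ∈ D m h x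
  symm := ⟨fun x y hxy => symm_key hm hmh hxy⟩
  loopless := ⟨fun x hx => by
    have hx' : (x - x).val ∈ D m h x := hx
    rw [sub_self, ZMod.val_zero] at hx'
    rename' hx' => hx
    have := (mem_D_iff hm hmh).mp hx
    omega⟩

lemma adj_iff (hm : 1 ≤ m) (hmh : m + 1 ≤ h) {x y : ZMod (2*h+1)} :
    (G hm hmh).Adj x y ↔ (y - x).val ∈ D m h x := Iff.rfl

lemma neighborSet_eq (hm : 1 ≤ m) (hmh : m + 1 ≤ h) (x : ZMod (2*h+1)) :
    (G hm hmh).neighborSet x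
      = (fun t : ℕ => x + (t : ZMod (2*h+1))) '' ↑(D m h x) := by
  ext y
  simp only [mem_neighborSet, Set.mem_image, Finset.mem_coe, adj_iff hm hmh]
  constructor
  · intro hxy
    refine ⟨(y - x).val, hxy, ?_⟩
    rw [ZMod.natCast_rightInverse (y - x)]
    ring
  · rintro ⟨t, htD, rfl⟩
    have hb := (mem_D_iff hm hmh).mp htD
    have htn : t < 2*h+1 := by omega
    have : x + (t : ZMod (2*h+1)) - x = (t : ZMod (2*h+1)) := by ring
    rw [this, ZMod.val_cast_of_lt htn]
    exact htD

lemma ncard_neighborSet (hm : 1 ≤ m) (hmh : m + 1 ≤ h) (x : ZMod (2*h+1)) :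
    ((G hm hmh).neighborSet x).ncard = (D m h x).card := by
  rw [neighborSet_eq hm hmh x, Set.ncard_image_of_injOn, Set.ncard_coe_finset]
  intro t1 ht1 t2 ht2 heq
  simp only [Finset.mem_coe] at ht1 ht2
  have hb1 := (mem_D_iff hm hmh).mp ht1
  have hb2 := (mem_D_iff hm hmh).mp ht2
  have e1 : (t1 : ZMod (2*h+1)) = (t2 : ZMod (2*h+1)) := by
    have := heq
    simpa using this
  have := congrArg ZMod.val e1
  rwa [ZMod.val_cast_of_lt (by omega), ZMod.val_cast_of_lt (by omega)] at this

lemma card_D (hm : 1 ≤ m) (hmh : m + 1 ≤ h) (x : ZMod (2*h+1)) :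
    (D m h x).card = if x.val = 0 then 2*m else 2*m+1 := by
  have hx := ZMod.val_lt x
  have hd1 : Disjoint (Finset.Icc 1 m) (Finset.Icc (2*h+1-m) (2*h)) := by
    rw [Finset.disjoint_left]
    intro a ha hb
    simp only [Finset.mem_Icc] at ha hb
    omega
  have hd2 : Disjoint (Finset.Icc 1 m ∪ Finset.Icc (2*h+1-m) (2*h))
      ((if x.val ∈ Finset.Icc 1 h then ({h} : Finset ℕ)
        else if x.val = 0 then ∅ else {h+1})) := by
    rw [Finset.disjoint_left]
    intro a ha hb
    simp only [Finset.mem_union, Finset.mem_Icc] at ha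
    split_ifs at hb <;> simp only [Finset.mem_singleton, Finset.notMem_empty] at hb <;> omega
  rw [D, Finset.card_union_of_disjoint hd2, Finset.card_union_of_disjoint hd1,
    Nat.card_Icc, Nat.card_Icc]
  split_ifs with h1 h2 <;> simp only [Finset.mem_Icc] at h1 <;>
    simp only [Finset.card_singleton, Finset.card_empty] <;> omega

lemma adj_succ (hm : 1 ≤ m) (hmh : m + 1 ≤ h) (x : ZMod (2*h+1)) :
    (G hm hmh).Adj x (x + 1) := by
  rw [adj_iff hm hmh]
  have : x + 1 - x = ((1 : ℕ) : ZMod (2*h+1)) := by push_cast; ring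
  rw [this, ZMod.val_cast_of_lt (by omega)]
  rw [mem_D_iff hm hmh]
  omega

lemma connected (hm : 1 ≤ m) (hmh : m + 1 ≤ h) : (G hm hmh).Connected := by
  have key : ∀ j : ℕ, (G hm hmh).Reachable 0 (j : ZMod (2*h+1)) := by
    intro j
    induction j with
    | zero =>
      simp only [Nat.cast_zero]
      exact Reachable.refl 0
    | succ j ih =>
      refine ih.trans (Adj.reachable ?_)
      have : ((j+1 : ℕ) : ZMod (2*h+1)) = (j : ZMod (2*h+1)) + 1 := by push_cast; ring
      rw [this]
      exact adj_succ hm hmh _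
  have reach : ∀ x : ZMod (2*h+1), (G hm hmh).Reachable 0 x := by
    intro x
    have := key x.val
    rwa [ZMod.natCast_rightInverse x] at this
  constructor
  exact fun a b => (reach a).symm.trans (reach b)

lemma main (hm : 1 ≤ m) (hmh : m + 1 ≤ h) :
    ∃ G : SimpleGraph (ZMod (2*h+1)), G.Connected ∧
      (G.neighborSet 0).ncard = 2*m ∧
      ∀ w : ZMod (2*h+1), w ≠ 0 → (G.neighborSet w).ncard = 2*m+1 := by
  refine ⟨G hm hmh, connected hm hmh, ?_, ?_⟩
  · rw [ncard_neighborSet hm hmh, card_D hm hmh]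
    simp [ZMod.val_zero]
  · intro w hw
    rw [ncard_neighborSet hm hmh, card_D hm hmh]
    have : w.val ≠ 0 := by
      intro h0
      apply hw
      have := ZMod.natCast_rightInverse w
      rw [← this, h0]
      simp
    simp [this]

def zmodEquiv (N : ℕ) [NeZero N] : Fin N ≃ ZMod N where
  toFun a := ((a : ℕ) : ZMod N)
  invFun x := ⟨x.val, x.val_lt⟩
  left_inv a := by
    ext
    simp [ZMod.val_cast_of_lt a.isLt]
  right_inv x := by
    simp only
    exact ZMod.natCast_rightInverse x

end NearReg

theorem connected_nearly_regular (k n : ℕ) (hk : Odd k) (hk3 : 3 ≤ k) (hn : Odd n)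
    (hnk : k + 2 ≤ n) :
    ∃ G : SimpleGraph (Fin n), G.Connected ∧
      ∃ v : Fin n, (G.neighborSet v).ncard = k - 1 ∧
        ∀ w : Fin n, w ≠ v → (G.neighborSet w).ncard = k := by
  obtain ⟨m, hkm⟩ := hk
  obtain ⟨h, hnh⟩ := hn
  have hk' : k = 2*m+1 := by omega
  have hn' : n = 2*h+1 := by omega
  have hm : 1 ≤ m := by omega
  have hmh : m + 1 ≤ h := by omega
  subst hk' hn'
  obtain ⟨G₀, hconn, hdeg0, hdeg⟩ := NearReg.main hm hmh
  haveI : NeZero (2*h+1) := ⟨by omega⟩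
  set e : Fin (2*h+1) ≃ ZMod (2*h+1) := NearReg.zmodEquiv (2*h+1) with he
  refine ⟨G₀.comap e.toEmbedding, ?_, e.symm 0, ?_, ?_⟩
  · exact (SimpleGraph.Iso.connected_iff (SimpleGraph.Iso.comap e G₀)).mpr hconn
  · have hiso := SimpleGraph.Iso.mapNeighborSet (SimpleGraph.Iso.comap e G₀) (e.symm 0)
    rw [SimpleGraph.Iso.comap_apply, Equiv.apply_symm_apply] at hiso
    have : ((G₀.comap e.toEmbedding).neighborSet (e.symm 0)).ncard
        = (G₀.neighborSet 0).ncard := by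
      rw [← Nat.card_coe_set_eq, ← Nat.card_coe_set_eq]
      exact Nat.card_congr hiso
    rw [this, hdeg0]
    omega
  · intro w hw
    have hew : e w ≠ 0 := by
      intro h0
      apply hw
      rw [← h0]
      simp
    have hiso := SimpleGraph.Iso.mapNeighborSet (SimpleGraph.Iso.comap e G₀) w
    rw [SimpleGraph.Iso.comap_apply] at hiso
    have : ((G₀.comap e.toEmbedding).neighborSet w).ncard
        = (G₀.neighborSet (e w)).ncard := by
      rw [← Nat.card_coe_set_eq, ← Nat.card_coe_set_eq]
      exact Nat.card_congr hiso
    rw [this, hdeg (e w) hew]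
end

section
/- Let G be a graph on {1,...,n} and let r, k ≥ 1 with k ≥ r and r·k even. Then the (r,k)-edit number of G satisfies N_{r,k}(G) ≥ (3/2)·r·(k-r+1). -/
open SimpleGraph

def IsExtension (n r k : ℕ) (G : SimpleGraph (Fin n)) (H : SimpleGraph (Fin (n + r))) : Prop :=
  (∀ i : Fin n, (H.neighborSet (Fin.castAdd r i)).ncard = (G.neighborSet i).ncard) ∧
  (∀ j : Fin r, (H.neighborSet (Fin.natAdd n j)).ncard = k)

def E1 (n r : ℕ) (H : SimpleGraph (Fin (n + r))) : Set (Sym2 (Fin (n + r))) :=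
  {e | e ∈ H.edgeSet ∧ ∃ i : Fin n, Fin.castAdd r i ∈ e}

def oldEdges (n r : ℕ) (G : SimpleGraph (Fin n)) : Set (Sym2 (Fin (n + r))) :=
  Sym2.map (Fin.castAdd r) '' G.edgeSet

noncomputable def editCost (n r : ℕ) (G : SimpleGraph (Fin n)) (H : SimpleGraph (Fin (n + r))) : ℕ :=
  (oldEdges n r G \ E1 n r H).ncard + (E1 n r H \ oldEdges n r G).ncard

noncomputable def editNumber (n r k : ℕ) (G : SimpleGraph (Fin n)) : ℕ∞ :=
  sInf ((fun H => (editCost n r G H : ℕ∞)) '' {H | IsExtension n r k G H})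

open Finset in
lemma key_bound (n r k : ℕ) (G : SimpleGraph (Fin n)) (hr : 1 ≤ r) (hrk : r ≤ k)
    (H : SimpleGraph (Fin (n + r))) (hH : IsExtension n r k G H) :
    3 * (r * (k - r + 1)) ≤ 2 * editCost n r G H := by
  classical
  obtain ⟨hold, hnew⟩ := hH
  -- case analysis on vertices
  have hcases : ∀ v : Fin (n+r), (∃ i : Fin n, v = Fin.castAdd r i) ∨
      ∃ j : Fin r, v = Fin.natAdd n j :=
    fun v => Fin.addCases (fun i => Or.inl ⟨i, rfl⟩) (fun j => Or.inr ⟨j, rfl⟩) v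
  have hne : ∀ (i : Fin n) (j : Fin r), Fin.castAdd r i ≠ Fin.natAdd n j := by
    intro i j h
    have := congrArg Fin.val h
    simp [Fin.castAdd, Fin.natAdd] at this
    omega
  have hcinj : Function.Injective (Fin.castAdd r (n := n)) := Fin.castAdd_injective n r
  have hninj : Function.Injective (Fin.natAdd n (m := r)) := by
    intro a b h
    have := congrArg Fin.val h
    simp [Fin.natAdd] at this
    exact Fin.ext this
  set S : Fin r → Finset (Fin n) :=
    fun j => univ.filter (fun i => H.Adj (Fin.natAdd n j) (Fin.castAdd r i)) with hS
  set T : Fin n → Finset (Fin r) :=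
    fun i => univ.filter (fun j => H.Adj (Fin.castAdd r i) (Fin.natAdd n j)) with hT
  set P : Fin n → Finset (Fin n) :=
    fun i => univ.filter (fun i' => H.Adj (Fin.castAdd r i) (Fin.castAdd r i')) with hP
  set D : Fin n → Finset (Fin n) :=
    fun i => univ.filter (fun i' => G.Adj i i' ∧ ¬ H.Adj (Fin.castAdd r i) (Fin.castAdd r i')) with hD
  have hncard : ∀ v : Fin (n+r), (H.neighborSet v).ncard = (H.neighborFinset v).card := by
    intro v; rw [Set.ncard_eq_toFinset_card']; rfl
  have hGncard : ∀ i : Fin n, (G.neighborSet i).ncard = (G.neighborFinset i).card := by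
    intro i; rw [Set.ncard_eq_toFinset_card']; rfl
  -- Claim 1 : each new vertex has ≥ k - r + 1 old neighbors
  have claim1 : ∀ j : Fin r, k - r + 1 ≤ (S j).card := by
    intro j
    have hsub : H.neighborFinset (Fin.natAdd n j) ⊆
        (S j).image (Fin.castAdd r) ∪ ((univ.erase j).filter
          (fun j' => H.Adj (Fin.natAdd n j) (Fin.natAdd n j'))).image (Fin.natAdd n) := by
      intro v hv
      rw [mem_neighborFinset] at hv
      rcases hcases v with ⟨i, rfl⟩ | ⟨j', rfl⟩
      · exact mem_union_left _ (mem_image_of_mem _ (by simp [hS, hv]))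
      · refine mem_union_right _ (mem_image_of_mem _ ?_)
        simp only [mem_filter, mem_erase, mem_univ, and_true, true_and]
        exact ⟨fun h => H.loopless.irrefl _ (h ▸ hv), hv⟩
    have hk' : k = (H.neighborFinset (Fin.natAdd n j)).card := by
      rw [← hncard, hnew j]
    have hcard := card_le_card hsub
    have h1 : ((S j).image (Fin.castAdd r)).card = (S j).card := card_image_of_injective _ hcinj
    have h2 : (((univ.erase j).filter
          (fun j' => H.Adj (Fin.natAdd n j) (Fin.natAdd n j'))).image (Fin.natAdd n)).card ≤ r - 1 := by
      calc _ ≤ ((univ.erase j).filter _).card := card_image_le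
        _ ≤ (univ.erase j).card := card_filter_le _ _
        _ = r - 1 := by rw [card_erase_of_mem (mem_univ _), card_univ, Fintype.card_fin]
    have := card_union_le ((S j).image (Fin.castAdd r)) (((univ.erase j).filter
          (fun j' => H.Adj (Fin.natAdd n j) (Fin.natAdd n j'))).image (Fin.natAdd n))
    omega
  -- Claim 2 : degree split at old vertices
  have claim2 : ∀ i : Fin n, (P i).card + (T i).card = (G.neighborFinset i).card := by
    intro i
    have heq : H.neighborFinset (Fin.castAdd r i) =
        (P i).image (Fin.castAdd r) ∪ (T i).image (Fin.natAdd n) := by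
      ext v
      rw [mem_neighborFinset, mem_union]
      constructor
      · intro hv
        rcases hcases v with ⟨i', rfl⟩ | ⟨j, rfl⟩
        · exact Or.inl (mem_image_of_mem _ (by simp [hP, hv]))
        · exact Or.inr (mem_image_of_mem _ (by simp [hT, hv]))
      · rintro (h | h) <;> obtain ⟨w, hw, rfl⟩ := mem_image.1 h <;>
          simp only [hP, hT, mem_filter] at hw <;> exact hw.2
    have hdisj : Disjoint ((P i).image (Fin.castAdd r)) ((T i).image (Fin.natAdd n)) := by
      rw [Finset.disjoint_left]
      rintro v hv1 hv2
      obtain ⟨a, _, rfl⟩ := mem_image.1 hv1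
      obtain ⟨b, _, hb⟩ := mem_image.1 hv2
      exact hne a b hb.symm
    have := hold i
    rw [hncard, hGncard] at this
    rw [← this, heq, card_union_of_disjoint hdisj,
      card_image_of_injective _ hcinj, card_image_of_injective _ hninj]
  -- Claim 3 : T i ≤ D i
  have claim3 : ∀ i : Fin n, (T i).card ≤ (D i).card := by
    intro i
    have hDeq : D i = G.neighborFinset i \ P i := by
      ext i'
      simp [hD, hP, mem_neighborFinset, mem_sdiff]
    have h1 : (G.neighborFinset i).card ≤ (D i).card + (P i).card := by
      rw [hDeq]; exact card_le_card_sdiff_add_card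
    have := claim2 i
    omega
  -- double counting : ∑ S = ∑ T
  have hsum : ∑ j : Fin r, (S j).card = ∑ i : Fin n, (T i).card := by
    simp only [hS, hT, card_filter]
    rw [Finset.sum_comm]
    congr 1; ext i; congr 1; ext j
    congr 1
    simp only [eq_iff_iff]
    exact ⟨fun h => h.symm, fun h => h.symm⟩
  -- x := number of old-new edges of H
  set x := ∑ j : Fin r, (S j).card with hx
  have hxlb : r * (k - r + 1) ≤ x := by
    calc r * (k - r + 1) = ∑ _j : Fin r, (k - r + 1) := by
          rw [Finset.sum_const, card_univ, Fintype.card_fin, smul_eq_mul]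
      _ ≤ x := Finset.sum_le_sum (fun j _ => claim1 j)
  -- additions bound : x ≤ |E1 \ oldEdges|
  set Xf : Finset (Sym2 (Fin (n+r))) :=
    ((univ : Finset (Fin n × Fin r)).filter
      (fun p => H.Adj (Fin.castAdd r p.1) (Fin.natAdd n p.2))).image
      (fun p => s(Fin.castAdd r p.1, Fin.natAdd n p.2)) with hXf
  have hXcard : Xf.card = x := by
    rw [hXf, card_image_of_injective]
    · rw [hx]
      simp only [card_filter, hS]
      rw [Fintype.sum_prod_type, Finset.sum_comm]
      congr 1; ext j; congr 1; ext i
      congr 1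
      simp only [eq_iff_iff]
      exact ⟨fun h => h.symm, fun h => h.symm⟩
    · rintro ⟨a, b⟩ ⟨c, d⟩ h
      simp only [Sym2.eq_iff] at h
      rcases h with ⟨h1, h2⟩ | ⟨h1, h2⟩
      · simp [hcinj h1, hninj h2]
      · exact absurd h1 (hne a d)
  have hXsub : (Xf : Set (Sym2 (Fin (n+r)))) ⊆ E1 n r H \ oldEdges n r G := by
    intro e he
    simp only [hXf, coe_image, Set.mem_image, mem_coe, mem_filter] at he
    obtain ⟨⟨a, b⟩, ⟨-, hadj⟩, rfl⟩ := he
    constructor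
    · exact ⟨hadj, a, Sym2.mem_mk_left _ _⟩
    · rintro ⟨e', -, he'⟩
      induction e' using Sym2.inductionOn with
      | hf u v =>
        rw [Sym2.map_pair_eq, Sym2.eq_iff] at he'
        rcases he' with ⟨-, h2⟩ | ⟨h2, -⟩ <;> exact hne _ _ h2
  have haddlb : x ≤ (E1 n r H \ oldEdges n r G).ncard := by
    rw [← hXcard, ← Set.ncard_coe_finset]
    exact Set.ncard_le_ncard hXsub (Set.toFinite _)
  -- removals bound : ∑ D ≤ 2 * |oldEdges \ E1|
  set Dp : Finset (Fin n × Fin n) :=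
    (univ : Finset (Fin n × Fin n)).filter
      (fun p => G.Adj p.1 p.2 ∧ ¬ H.Adj (Fin.castAdd r p.1) (Fin.castAdd r p.2)) with hDp
  have hDpcard : Dp.card = ∑ i : Fin n, (D i).card := by
    simp only [hDp, hD, card_filter]
    rw [Fintype.sum_prod_type]
  set f : Fin n × Fin n → Sym2 (Fin (n+r)) :=
    fun p => s(Fin.castAdd r p.1, Fin.castAdd r p.2) with hf
  have hfib : ∀ e ∈ Dp.image f, (Dp.filter (fun q => f q = e)).card ≤ 2 := by
    intro e he
    obtain ⟨⟨a, b⟩, -, rfl⟩ := mem_image.1 he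
    have hsub2 : Dp.filter (fun q => f q = f (a, b)) ⊆ {(a, b), (b, a)} := by
      rintro ⟨c, d⟩ hq
      simp only [mem_filter, hf, Sym2.eq_iff] at hq
      rcases hq.2 with ⟨h1, h2⟩ | ⟨h1, h2⟩
      · simp [hcinj h1, hcinj h2]
      · simp [hcinj h1, hcinj h2]
    calc _ ≤ ({(a, b), (b, a)} : Finset (Fin n × Fin n)).card := card_le_card hsub2
      _ ≤ 2 := card_insert_le _ _ |>.trans (by simp)
  have hDple : Dp.card ≤ 2 * (Dp.image f).card := card_le_mul_card_image Dp 2 hfib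
  have hfsub : ((Dp.image f : Finset (Sym2 (Fin (n+r)))) : Set (Sym2 (Fin (n+r)))) ⊆
      oldEdges n r G \ E1 n r H := by
    intro e he
    simp only [coe_image, Set.mem_image, mem_coe] at he
    obtain ⟨⟨a, b⟩, hab, rfl⟩ := he
    simp only [hDp, mem_filter] at hab
    obtain ⟨-, hGadj, hnadj⟩ := hab
    constructor
    · exact ⟨s(a, b), hGadj, Sym2.map_pair_eq _ _ _⟩
    · rintro ⟨he1, -⟩
      exact hnadj he1
  have hremlb : (Dp.image f).card ≤ (oldEdges n r G \ E1 n r H).ncard := by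
    rw [← Set.ncard_coe_finset]
    exact Set.ncard_le_ncard hfsub (Set.toFinite _)
  -- combine
  have hTx : ∑ i : Fin n, (T i).card = x := hsum.symm
  have hDx : x ≤ ∑ i : Fin n, (D i).card := by
    rw [← hTx]
    exact Finset.sum_le_sum (fun i _ => claim3 i)
  unfold editCost
  omega

theorem edit_number_lower_bound (n r k : ℕ) (G : SimpleGraph (Fin n))
    (hr : 1 ≤ r) (hk : 1 ≤ k) (hrk : r ≤ k) (heven : Even (r * k)) :
    ((3 * (r * (k - r + 1)) / 2 : ℕ) : ℕ∞) ≤ editNumber n r k G := by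
  refine le_sInf ?_
  rintro b ⟨H, hH, rfl⟩
  have h2 := key_bound n r k G hr hrk H hH
  have : 3 * (r * (k - r + 1)) / 2 ≤ editCost n r G H := by
    have := Nat.div_le_div_right (c := 2) h2
    rwa [Nat.mul_div_cancel_left _ (by norm_num : 0 < 2)] at this
  simp only []
  exact_mod_cast this
end

section
/- If a graph G on {1,...,n} contains an (r,t)-subgraph with t = (1/2)·r·(k-r+1), where k ≥ r and r·k is even, then G admits an (r,k)-extension H with |E(G) \ E_1(H)| = t and |E_1(H) \ E(G)| = 2t, so N_{r,k}(G) ≤ 3t. -/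
open SimpleGraph

def IsRTSubgraph {V : Type*} (G : SimpleGraph V) (r t : ℕ) (S : Set (Sym2 V)) : Prop :=
  S ⊆ G.edgeSet ∧ S.ncard = t ∧ ∀ v : V, {e | e ∈ S ∧ v ∈ e}.ncard ≤ r

namespace SGE

open Finset

noncomputable section
open scoped Classical

variable {n r : ℕ}

def Sfin (S : Set (Sym2 (Fin n))) : Finset (Sym2 (Fin n)) := (Set.toFinite S).toFinset

lemma mem_Sfin {S : Set (Sym2 (Fin n))} {e : Sym2 (Fin n)} : e ∈ Sfin S ↔ e ∈ S :=
  (Set.toFinite S).mem_toFinset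

def inc (S : Set (Sym2 (Fin n))) (v : Fin n) : Finset (Sym2 (Fin n)) :=
  (Sfin S).filter (fun e => v ∈ e)

lemma mem_inc {S : Set (Sym2 (Fin n))} {v : Fin n} {e : Sym2 (Fin n)} :
    e ∈ inc S v ↔ e ∈ S ∧ v ∈ e := by
  simp [inc, mem_Sfin]

def dS (S : Set (Sym2 (Fin n))) (v : Fin n) : ℕ := (inc S v).card

def NN (S : Set (Sym2 (Fin n))) (v : Fin n) : ℕ :=
  ∑ w ∈ Finset.univ.filter (fun w => w < v), dS S w

def rk (S : Set (Sym2 (Fin n))) (v : Fin n) (e : Sym2 (Fin n)) : ℕ :=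
  if h : e ∈ inc S v then ((inc S v).equivFin ⟨e, h⟩ : ℕ) else 0

def idx (S : Set (Sym2 (Fin n))) (v : Fin n) (e : Sym2 (Fin n)) : ℕ := NN S v + rk S v e

lemma rk_lt {S : Set (Sym2 (Fin n))} {v : Fin n} {e : Sym2 (Fin n)} (h : e ∈ inc S v) :
    rk S v e < dS S v := by
  rw [rk, dif_pos h]; exact ((inc S v).equivFin ⟨e, h⟩).isLt

lemma rk_injOn {S : Set (Sym2 (Fin n))} {v : Fin n} {e e' : Sym2 (Fin n)}
    (he : e ∈ inc S v) (he' : e' ∈ inc S v) (h : rk S v e = rk S v e') : e = e' := by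
  simp only [rk, dif_pos he, dif_pos he'] at h
  have := (inc S v).equivFin.injective (Fin.val_injective h)
  exact Subtype.ext_iff.mp this

lemma idx_mod_injOn {S : Set (Sym2 (Fin n))} {v : Fin n} (hdr : dS S v ≤ r)
    {e e' : Sym2 (Fin n)} (he : e ∈ inc S v) (he' : e' ∈ inc S v)
    (h : idx S v e % r = idx S v e' % r) : e = e' := by
  have h1 := rk_lt he
  have h2 := rk_lt he'
  have hmod : rk S v e ≡ rk S v e' [MOD r] := Nat.ModEq.add_left_cancel' _ h
  have ha := Nat.mod_eq_of_lt (lt_of_lt_of_le h1 hdr)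
  have hb := Nat.mod_eq_of_lt (lt_of_lt_of_le h2 hdr)
  rw [Nat.ModEq] at hmod
  exact rk_injOn he he' (by omega)

lemma NN_add_dS_le {S : Set (Sym2 (Fin n))} {v v' : Fin n} (h : v < v') :
    NN S v + dS S v ≤ NN S v' := by
  have hnot : v ∉ Finset.univ.filter (fun w => w < v) := by simp
  have hsub : insert v (Finset.univ.filter (fun w => w < v)) ⊆
      Finset.univ.filter (fun w => w < v') := by
    intro w hw
    simp only [Finset.mem_insert, Finset.mem_filter, Finset.mem_univ, true_and] at hw ⊢
    rcases hw with rfl | hw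
    · exact h
    · exact hw.trans h
  calc NN S v + dS S v = ∑ w ∈ insert v (Finset.univ.filter (fun w => w < v)), dS S w := by
        rw [Finset.sum_insert hnot, add_comm]; rfl
    _ ≤ _ := Finset.sum_le_sum_of_subset hsub

def Mtot (S : Set (Sym2 (Fin n))) : ℕ := ∑ v : Fin n, dS S v

lemma NN_add_dS_le_M {S : Set (Sym2 (Fin n))} (v : Fin n) : NN S v + dS S v ≤ Mtot S := by
  have hnot : v ∉ Finset.univ.filter (fun w => w < v) := by simp
  calc NN S v + dS S v = ∑ w ∈ insert v (Finset.univ.filter (fun w => w < v)), dS S w := by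
        rw [Finset.sum_insert hnot, add_comm]; rfl
    _ ≤ _ := Finset.sum_le_sum_of_subset (fun w _ => Finset.mem_univ w)

def Ifin (S : Set (Sym2 (Fin n))) : Finset ((_ : Fin n) × Sym2 (Fin n)) :=
  Finset.univ.sigma (fun v => inc S v)

lemma mem_Ifin {S : Set (Sym2 (Fin n))} {p : (_ : Fin n) × Sym2 (Fin n)} :
    p ∈ Ifin S ↔ p.2 ∈ inc S p.1 := by
  simp [Ifin, Finset.mem_sigma]

lemma card_Ifin (S : Set (Sym2 (Fin n))) : (Ifin S).card = Mtot S := by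
  rw [Ifin, Finset.card_sigma]; rfl

lemma idx_lt {S : Set (Sym2 (Fin n))} {p : (_ : Fin n) × Sym2 (Fin n)} (hp : p ∈ Ifin S) :
    idx S p.1 p.2 < Mtot S :=
  lt_of_lt_of_le (Nat.add_lt_add_left (rk_lt (mem_Ifin.mp hp)) _) (NN_add_dS_le_M p.1)

lemma idx_injOn (S : Set (Sym2 (Fin n))) :
    ∀ p ∈ Ifin S, ∀ q ∈ Ifin S, idx S p.1 p.2 = idx S q.1 q.2 → p = q := by
  rintro ⟨v, e⟩ hp ⟨w, e'⟩ hq h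
  rw [mem_Ifin] at hp hq
  simp only at hp hq h
  rcases lt_trichotomy v w with hlt | heq | hlt
  · exfalso
    have h1 := NN_add_dS_le (S := S) hlt
    have h2 := rk_lt hp
    have h3 : NN S w ≤ idx S w e' := Nat.le_add_right _ _
    simp only [idx] at h h3
    omega
  · subst heq
    have : rk S v e = rk S v e' := by simp only [idx] at h; omega
    rw [rk_injOn hp hq this]
  · exfalso
    have h1 := NN_add_dS_le (S := S) hlt
    have h2 := rk_lt hq
    have h3 : NN S v ≤ idx S v e := Nat.le_add_right _ _
    simp only [idx] at h h3
    omega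

lemma image_idx (S : Set (Sym2 (Fin n))) :
    (Ifin S).image (fun p => idx S p.1 p.2) = Finset.range (Mtot S) := by
  apply Finset.eq_of_subset_of_card_le
  · intro m hm
    obtain ⟨p, hp, rfl⟩ := Finset.mem_image.mp hm
    exact Finset.mem_range.mpr (idx_lt hp)
  · rw [Finset.card_range, Finset.card_image_of_injOn (fun p hp q hq h => idx_injOn S p hp q hq h),
      card_Ifin]

lemma card_range_mod (r c j : ℕ) (hj : j < r) :
    ((Finset.range (r * c)).filter (fun m => m % r = j)).card = c := by
  have hrpos : 0 < r := lt_of_le_of_lt (Nat.zero_le j) hj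
  have key : ((Finset.range (r * c)).filter (fun m => m % r = j)).card
      = (Finset.range c).card := by
    apply Finset.card_nbij' (i := fun m => m / r) (j := fun q => r * q + j)
    · intro m hm
      simp only [Finset.mem_coe, Finset.mem_filter, Finset.mem_range] at hm ⊢
      exact Nat.div_lt_iff_lt_mul hrpos |>.mpr (by rw [mul_comm]; exact hm.1)
    · intro q hq
      simp only [Finset.mem_coe, Finset.mem_filter, Finset.mem_range] at hq ⊢
      constructor
      · calc r * q + j < r * q + r := by omega
          _ = r * (q + 1) := by ring
          _ ≤ r * c := Nat.mul_le_mul_left r hq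
      · rw [add_comm, Nat.add_mul_mod_self_left, Nat.mod_eq_of_lt hj]
    · intro m hm
      simp only [Finset.mem_coe, Finset.mem_filter, Finset.mem_range] at hm
      rw [← hm.2]
      exact Nat.div_add_mod m r
    · intro q hq
      dsimp only
      rw [Nat.mul_add_div hrpos, Nat.div_eq_of_lt hj, add_zero]
  rw [key, Finset.card_range]

lemma card_Ifin_filter (S : Set (Sym2 (Fin n))) {c j : ℕ} (hM : Mtot S = r * c) (hj : j < r) :
    ((Ifin S).filter (fun p => idx S p.1 p.2 % r = j)).card = c := by
  have hinj : Set.InjOn (fun p : (_ : Fin n) × Sym2 (Fin n) => idx S p.1 p.2)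
      (((Ifin S).filter (fun p => idx S p.1 p.2 % r = j)) : Finset _) := by
    intro p hp q hq h
    simp only [Finset.coe_filter, Set.mem_setOf_eq] at hp hq
    exact idx_injOn S p hp.1 q hq.1 h
  rw [← Finset.card_image_of_injOn hinj,
    ← Finset.filter_image (f := fun p : (_ : Fin n) × Sym2 (Fin n) => idx S p.1 p.2)
      (p := fun m => m % r = j), image_idx, hM, card_range_mod r c j hj]

def Bp (S : Set (Sym2 (Fin n))) (r : ℕ) (v : Fin n) (j : ℕ) : Prop :=
  ∃ e, e ∈ S ∧ v ∈ e ∧ idx S v e % r = j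

def Hsum (G : SimpleGraph (Fin n)) (S : Set (Sym2 (Fin n))) (r : ℕ) :
    SimpleGraph (Fin n ⊕ Fin r) where
  Adj x y :=
    match x, y with
    | Sum.inl u, Sum.inl v => G.Adj u v ∧ s(u, v) ∉ S
    | Sum.inl v, Sum.inr j => Bp S r v (j : ℕ)
    | Sum.inr j, Sum.inl v => Bp S r v (j : ℕ)
    | Sum.inr i, Sum.inr j => i ≠ j
  symm := by
    constructor
    rintro (u | i) (v | j) h
    · exact ⟨h.1.symm, fun hs => h.2 (by rwa [Sym2.eq_swap] at hs)⟩
    · exact h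
    · exact h
    · exact Ne.symm h
  loopless := by
    constructor
    rintro (u | i) h
    · exact G.loopless.irrefl u h.1
    · exact h rfl

@[simp] lemma Hsum_adj_inl_inl {G : SimpleGraph (Fin n)} {S : Set (Sym2 (Fin n))}
    {u v : Fin n} : (Hsum G S r).Adj (Sum.inl u) (Sum.inl v) ↔ G.Adj u v ∧ s(u, v) ∉ S :=
  Iff.rfl

@[simp] lemma Hsum_adj_inl_inr {G : SimpleGraph (Fin n)} {S : Set (Sym2 (Fin n))}
    {v : Fin n} {j : Fin r} : (Hsum G S r).Adj (Sum.inl v) (Sum.inr j) ↔ Bp S r v (j : ℕ) :=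
  Iff.rfl

@[simp] lemma Hsum_adj_inr_inl {G : SimpleGraph (Fin n)} {S : Set (Sym2 (Fin n))}
    {v : Fin n} {j : Fin r} : (Hsum G S r).Adj (Sum.inr j) (Sum.inl v) ↔ Bp S r v (j : ℕ) :=
  Iff.rfl

@[simp] lemma Hsum_adj_inr_inr {G : SimpleGraph (Fin n)} {S : Set (Sym2 (Fin n))}
    {i j : Fin r} : (Hsum G S r).Adj (Sum.inr i) (Sum.inr j) ↔ i ≠ j :=
  Iff.rfl

lemma handshake {G : SimpleGraph (Fin n)} {S : Set (Sym2 (Fin n))} (hsub : S ⊆ G.edgeSet) :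
    Mtot S = 2 * (Sfin S).card := by
  have key : ∀ e, e ∈ Sfin S → (Finset.univ.filter (fun v => v ∈ e)).card = 2 := by
    intro e
    induction e using Sym2.ind with
    | _ a b =>
      intro he
      have hne : a ≠ b := G.ne_of_adj (G.mem_edgeSet.mp (hsub (mem_Sfin.mp he)))
      have hset : Finset.univ.filter (fun v => v ∈ s(a, b)) = {a, b} := by
        ext x
        simp [Sym2.mem_iff]
      rw [hset, Finset.card_insert_of_notMem (by simp [hne]), Finset.card_singleton]
  calc Mtot S = ∑ v : Fin n, ∑ e ∈ Sfin S, if v ∈ e then 1 else 0 := by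
        simp only [Mtot, dS, inc, Finset.card_filter]
    _ = ∑ e ∈ Sfin S, ∑ v : Fin n, if v ∈ e then 1 else 0 := Finset.sum_comm
    _ = ∑ e ∈ Sfin S, 2 := by
        refine Finset.sum_congr rfl fun e he => ?_
        rw [← Finset.card_filter]
        exact key e he
    _ = 2 * (Sfin S).card := by rw [Finset.sum_const, smul_eq_mul, mul_comm]

lemma A'card {G : SimpleGraph (Fin n)} {S : Set (Sym2 (Fin n))} (hsub : S ⊆ G.edgeSet)
    (v : Fin n) : ({u | G.Adj v u ∧ s(v, u) ∈ S} : Set (Fin n)).ncard = dS S v := by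
  have himg : (fun u => s(v, u)) '' {u | G.Adj v u ∧ s(v, u) ∈ S} = (inc S v : Set (Sym2 (Fin n))) := by
    ext e
    constructor
    · rintro ⟨u, ⟨hadj, hmem⟩, rfl⟩
      simpa using mem_inc.mpr ⟨hmem, Sym2.mem_mk_left v u⟩
    · intro he
      obtain ⟨heS, hv⟩ := mem_inc.mp (by simpa using he)
      obtain ⟨u, rfl⟩ := Sym2.mem_iff_exists.mp hv
      exact ⟨u, ⟨G.mem_edgeSet.mp (hsub heS), heS⟩, rfl⟩
  have hinj : Set.InjOn (fun u => s(v, u)) {u | G.Adj v u ∧ s(v, u) ∈ S} := by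
    intro u hu u' hu' h
    rcases Sym2.eq_iff.mp h with ⟨-, h2⟩ | ⟨h1, h2⟩
    · exact h2
    · exact absurd h1 hu'.1.ne
  calc ({u | G.Adj v u ∧ s(v, u) ∈ S} : Set (Fin n)).ncard
      = ((fun u => s(v, u)) '' {u | G.Adj v u ∧ s(v, u) ∈ S}).ncard :=
        (Set.ncard_image_of_injOn hinj).symm
    _ = (inc S v : Set (Sym2 (Fin n))).ncard := by rw [himg]
    _ = dS S v := Set.ncard_coe_finset _

lemma Bvcard {S : Set (Sym2 (Fin n))} (hrpos : 0 < r) {v : Fin n} (hdr : dS S v ≤ r) :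
    ({j : Fin r | Bp S r v (j : ℕ)} : Set (Fin r)).ncard = dS S v := by
  have himg : (fun e => (⟨idx S v e % r, Nat.mod_lt _ hrpos⟩ : Fin r)) ''
      (inc S v : Set (Sym2 (Fin n))) = {j : Fin r | Bp S r v (j : ℕ)} := by
    ext j
    constructor
    · rintro ⟨e, he, rfl⟩
      obtain ⟨heS, hv⟩ := mem_inc.mp (by simpa using he)
      exact ⟨e, heS, hv, rfl⟩
    · rintro ⟨e, heS, hve, hmod⟩
      exact ⟨e, by simpa using mem_inc.mpr ⟨heS, hve⟩, Fin.ext hmod⟩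
  have hinj : Set.InjOn (fun e => (⟨idx S v e % r, Nat.mod_lt _ hrpos⟩ : Fin r))
      (inc S v : Set (Sym2 (Fin n))) := by
    intro e he e' he' h
    exact idx_mod_injOn hdr (by simpa using he) (by simpa using he')
      (congrArg Fin.val h)
  rw [← himg, Set.ncard_image_of_injOn hinj, Set.ncard_coe_finset]
  rfl

lemma Wcard {S : Set (Sym2 (Fin n))} {c : ℕ} (hM : Mtot S = r * c)
    (hdr : ∀ v : Fin n, dS S v ≤ r) (j : Fin r) :
    ({v : Fin n | Bp S r v (j : ℕ)} : Set (Fin n)).ncard = c := by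
  classical
  set F := (Ifin S).filter (fun p => idx S p.1 p.2 % r = (j : ℕ)) with hF
  have himg : ((F.image (fun p => p.1)) : Set (Fin n)) = {v : Fin n | Bp S r v (j : ℕ)} := by
    ext v
    simp only [Finset.coe_image, Set.mem_image, Finset.mem_coe, Set.mem_setOf_eq]
    constructor
    · rintro ⟨p, hp, rfl⟩
      rw [hF, Finset.mem_filter, mem_Ifin] at hp
      obtain ⟨heS, hv⟩ := mem_inc.mp hp.1
      exact ⟨p.2, heS, hv, hp.2⟩
    · rintro ⟨e, heS, hve, hmod⟩
      refine ⟨⟨v, e⟩, ?_, rfl⟩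
      rw [hF, Finset.mem_filter, mem_Ifin]
      exact ⟨mem_inc.mpr ⟨heS, hve⟩, hmod⟩
  have hfst : Set.InjOn (fun p : (_ : Fin n) × Sym2 (Fin n) => p.1) (F : Set _) := by
    rintro ⟨v, e⟩ hp ⟨w, e'⟩ hq h
    simp only at h
    subst h
    simp only [hF, Finset.coe_filter, Set.mem_setOf_eq, mem_Ifin] at hp hq
    have : e = e' := idx_mod_injOn (hdr v) hp.1 hq.1 (by rw [hp.2, hq.2])
    rw [this]
  rw [← himg, Set.ncard_coe_finset, Finset.card_image_of_injOn hfst,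
    card_Ifin_filter S hM j.isLt]

lemma nb_inl {G : SimpleGraph (Fin n)} {S : Set (Sym2 (Fin n))} (hsub : S ⊆ G.edgeSet)
    (hrpos : 0 < r) (hdr : ∀ v : Fin n, dS S v ≤ r) (v : Fin n) :
    ((Hsum G S r).neighborSet (Sum.inl v)).ncard = (G.neighborSet v).ncard := by
  have hset : (Hsum G S r).neighborSet (Sum.inl v) =
      Sum.inl '' {u | G.Adj v u ∧ s(v, u) ∉ S} ∪
        Sum.inr '' {j : Fin r | Bp S r v (j : ℕ)} := by
    ext (u | j)
    · simp [SimpleGraph.mem_neighborSet]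
    · simp [SimpleGraph.mem_neighborSet]
  have hdisj : Disjoint (Sum.inl '' {u | G.Adj v u ∧ s(v, u) ∉ S} : Set (Fin n ⊕ Fin r))
      (Sum.inr '' {j : Fin r | Bp S r v (j : ℕ)}) := by
    rw [Set.disjoint_left]
    rintro x ⟨u, -, rfl⟩ ⟨j, -, h⟩
    exact absurd h (by simp)
  have hsplit : G.neighborSet v =
      {u | G.Adj v u ∧ s(v, u) ∉ S} ∪ {u | G.Adj v u ∧ s(v, u) ∈ S} := by
    ext u
    simp only [SimpleGraph.mem_neighborSet, Set.mem_union, Set.mem_setOf_eq]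
    tauto
  have hdisj2 : Disjoint ({u | G.Adj v u ∧ s(v, u) ∉ S} : Set (Fin n))
      {u | G.Adj v u ∧ s(v, u) ∈ S} := by
    rw [Set.disjoint_left]
    rintro u ⟨-, hu⟩ ⟨-, hu'⟩
    exact hu hu'
  rw [hset, Set.ncard_union_eq hdisj (Set.toFinite _) (Set.toFinite _),
    Set.ncard_image_of_injective _ Sum.inl_injective,
    Set.ncard_image_of_injective _ Sum.inr_injective,
    Bvcard hrpos (hdr v), hsplit,
    Set.ncard_union_eq hdisj2 (Set.toFinite _) (Set.toFinite _),
    A'card hsub v]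

lemma nb_inr {G : SimpleGraph (Fin n)} {S : Set (Sym2 (Fin n))} {c : ℕ}
    (hM : Mtot S = r * c) (hdr : ∀ v : Fin n, dS S v ≤ r) (j : Fin r) :
    ((Hsum G S r).neighborSet (Sum.inr j)).ncard = c + (r - 1) := by
  have hset : (Hsum G S r).neighborSet (Sum.inr j) =
      Sum.inl '' {v : Fin n | Bp S r v (j : ℕ)} ∪ Sum.inr '' {i : Fin r | i ≠ j} := by
    ext (u | i)
    · simp [SimpleGraph.mem_neighborSet]
    · simp [SimpleGraph.mem_neighborSet, ne_comm]
  have hdisj : Disjoint (Sum.inl '' {v : Fin n | Bp S r v (j : ℕ)} : Set (Fin n ⊕ Fin r))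
      (Sum.inr '' {i : Fin r | i ≠ j}) := by
    rw [Set.disjoint_left]
    rintro x ⟨u, -, rfl⟩ ⟨i, -, h⟩
    exact absurd h (by simp)
  have hne : ({i : Fin r | i ≠ j} : Set (Fin r)).ncard = r - 1 := by
    have h1 : insert j {i : Fin r | i ≠ j} = Set.univ := by
      ext i
      simp [em]
    have h2 := Set.ncard_insert_of_notMem (show j ∉ {i : Fin r | i ≠ j} by simp)
      (Set.toFinite _)
    rw [h1, Set.ncard_univ, Nat.card_eq_fintype_card, Fintype.card_fin] at h2
    omega
  rw [hset, Set.ncard_union_eq hdisj (Set.toFinite _) (Set.toFinite _),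
    Set.ncard_image_of_injective _ Sum.inl_injective,
    Set.ncard_image_of_injective _ Sum.inr_injective,
    Wcard hM hdr j, hne]

lemma Qcard {S : Set (Sym2 (Fin n))} {c : ℕ} (hM : Mtot S = r * c)
    (hdr : ∀ v : Fin n, dS S v ≤ r) :
    ({q : Fin n × Fin r | Bp S r q.1 (q.2 : ℕ)} : Set (Fin n × Fin r)).ncard = r * c := by
  classical
  set Q : Finset (Fin n × Fin r) := Finset.univ.filter (fun q => Bp S r q.1 (q.2 : ℕ)) with hQ
  have hcoe : (Q : Set (Fin n × Fin r)) = {q : Fin n × Fin r | Bp S r q.1 (q.2 : ℕ)} := by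
    ext q
    simp [hQ]
  have hfib : ∀ j : Fin r, (Q.filter (fun q => q.2 = j)).card = c := by
    intro j
    have hWfin : (Finset.univ.filter (fun v : Fin n => Bp S r v (j : ℕ))).card = c := by
      have : ((Finset.univ.filter (fun v : Fin n => Bp S r v (j : ℕ))) : Set (Fin n)) =
          {v : Fin n | Bp S r v (j : ℕ)} := by
        ext v
        simp
      rw [← Set.ncard_coe_finset, this, Wcard hM hdr j]
    rw [← hWfin]
    apply Finset.card_nbij' (i := fun q => q.1) (j := fun v => (v, j))
    · intro q hq
      simp only [hQ, Finset.mem_coe, Finset.mem_filter, Finset.mem_univ, true_and] at hq ⊢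
      rw [← hq.2]
      exact hq.1
    · intro v hv
      simp only [hQ, Finset.mem_coe, Finset.mem_filter, Finset.mem_univ, true_and] at hv ⊢
      exact ⟨hv, trivial⟩
    · intro q hq
      simp only [hQ, Finset.mem_coe, Finset.mem_filter] at hq
      rw [← hq.2]
    · intro v _
      rfl
  calc ({q : Fin n × Fin r | Bp S r q.1 (q.2 : ℕ)} : Set (Fin n × Fin r)).ncard
      = Q.card := by rw [← hcoe, Set.ncard_coe_finset]
    _ = ∑ j : Fin r, (Q.filter (fun q => q.2 = j)).card :=
        Finset.card_eq_sum_card_fiberwise (fun q _ => Finset.mem_univ q.2)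
    _ = ∑ _j : Fin r, c := Finset.sum_congr rfl (fun j _ => hfib j)
    _ = r * c := by simp [Finset.sum_const, mul_comm]

lemma castAdd_ne_natAdd (i : Fin n) (j : Fin r) : Fin.castAdd r i ≠ Fin.natAdd n j := by
  intro h
  have h1 := congrArg Fin.val h
  have h2 := i.isLt
  simp only [Fin.coe_castAdd, Fin.coe_natAdd] at h1
  omega

lemma split_fin (z : Fin (n + r)) :
    (∃ a : Fin n, z = Fin.castAdd r a) ∨ (∃ b : Fin r, z = Fin.natAdd n b) := by
  rcases hz : finSumFinEquiv.symm z with a | b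
  · left
    exact ⟨a, by rw [← finSumFinEquiv_apply_left, ← hz, Equiv.apply_symm_apply]⟩
  · right
    exact ⟨b, by rw [← finSumFinEquiv_apply_right, ← hz, Equiv.apply_symm_apply]⟩

lemma Sfin_card (S : Set (Sym2 (Fin n))) : (Sfin S).card = S.ncard :=
  (Set.ncard_eq_toFinset_card S (Set.toFinite S)).symm

lemma natAdd_injective : Function.Injective (Fin.natAdd n (m := r)) := by
  intro i j h
  have := congrArg Fin.val h
  simp only [Fin.coe_natAdd] at this
  exact Fin.ext (by omega)

end

end SGE

open SGE in
theorem subgraph_gives_extension (n r k : ℕ) (G : SimpleGraph (Fin n))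
    (hr : 1 ≤ r) (hk : 1 ≤ k) (hrk : r ≤ k) (heven : Even (r * k))
    (S : Set (Sym2 (Fin n))) (hS : IsRTSubgraph G r (r * (k - r + 1) / 2) S) :
    (∃ H : SimpleGraph (Fin (n + r)), IsExtension n r k G H ∧
      (oldEdges n r G \ E1 n r H).ncard = r * (k - r + 1) / 2 ∧
      (E1 n r H \ oldEdges n r G).ncard = 2 * (r * (k - r + 1) / 2)) ∧
    editNumber n r k G ≤ ((3 * (r * (k - r + 1) / 2) : ℕ) : ℕ∞) := by
  classical
  obtain ⟨hsub, hcard, hdeg⟩ := hS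
  set c := k - r + 1 with hc
  set t := r * c / 2 with ht
  have hrpos : 0 < r := hr
  have heven2 : Even (r * c) := by
    obtain ⟨m, hm⟩ := Nat.le.dest hrk
    have e1 : Even (r * r + r * m) := by
      rw [show r * r + r * m = r * k from by rw [← hm]; ring]
      exact heven
    have e2 : Even (r * r + r) := by
      have h := Nat.even_mul_succ_self r
      rwa [Nat.mul_succ] at h
    have e3 : Even (r * m + r) := by
      rw [Nat.even_add] at e1 e2 ⊢
      tauto
    have hcm : c = m + 1 := by omega
    rw [hcm, Nat.mul_succ]
    exact e3
  have h2t : 2 * t = r * c := by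
    obtain ⟨w, hw⟩ := heven2
    rw [ht, hw]
    omega
  have hdr : ∀ v : Fin n, dS S v ≤ r := by
    intro v
    have h := hdeg v
    have hh : {e | e ∈ S ∧ v ∈ e} = (inc S v : Set (Sym2 (Fin n))) := by
      ext e
      simp [mem_inc]
    rwa [hh, Set.ncard_coe_finset] at h
  have hM : Mtot S = r * c := by
    rw [handshake hsub, Sfin_card, hcard]
    exact h2t
  set H0 := Hsum G S r with hH0
  set H : SimpleGraph (Fin (n + r)) := SimpleGraph.comap (⇑finSumFinEquiv.symm) H0 with hH
  have hnb : ∀ x : Fin (n + r),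
      (H.neighborSet x).ncard = (H0.neighborSet (finSumFinEquiv.symm x)).ncard := by
    intro x
    have h1 : H.neighborSet x
        = ⇑finSumFinEquiv.symm ⁻¹' (H0.neighborSet (finSumFinEquiv.symm x)) := rfl
    rw [h1, ← Equiv.image_eq_preimage_symm]
    exact Set.ncard_image_of_injective _ finSumFinEquiv.injective
  have hext : IsExtension n r k G H := by
    constructor
    · intro i
      rw [hnb, finSumFinEquiv_symm_apply_castAdd]
      exact nb_inl hsub hrpos hdr i
    · intro j
      rw [hnb, finSumFinEquiv_symm_apply_natAdd, nb_inr hM hdr j]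
      omega
  have hHadj : ∀ a b : Fin (n + r),
      H.Adj a b ↔ H0.Adj (finSumFinEquiv.symm a) (finSumFinEquiv.symm b) := fun _ _ => Iff.rfl
  have hkey1 : ∀ a b : Fin n,
      (s(Fin.castAdd r a, Fin.castAdd r b) ∈ H.edgeSet ↔ (G.Adj a b ∧ s(a, b) ∉ S)) := by
    intro a b
    rw [SimpleGraph.mem_edgeSet, hHadj, finSumFinEquiv_symm_apply_castAdd,
      finSumFinEquiv_symm_apply_castAdd, hH0, Hsum_adj_inl_inl]
  have hkey2 : ∀ (v : Fin n) (j : Fin r),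
      (s(Fin.castAdd r v, Fin.natAdd n j) ∈ H.edgeSet ↔ Bp S r v (j : ℕ)) := by
    intro v j
    rw [SimpleGraph.mem_edgeSet, hHadj, finSumFinEquiv_symm_apply_castAdd,
      finSumFinEquiv_symm_apply_natAdd, hH0, Hsum_adj_inl_inr]
  have hAset : oldEdges n r G \ E1 n r H = Sym2.map (Fin.castAdd r) '' S := by
    ext x
    simp only [Set.mem_diff, oldEdges, Set.mem_image, E1, Set.mem_setOf_eq]
    constructor
    · rintro ⟨⟨e, heG, rfl⟩, hnot⟩
      refine ⟨e, ?_, rfl⟩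
      revert heG hnot
      induction e using Sym2.ind with
      | _ a b =>
        intro heG hnot
        by_contra heS
        refine hnot ⟨?_, a, ?_⟩
        · rw [Sym2.map_pair_eq]
          exact (hkey1 a b).mpr ⟨G.mem_edgeSet.mp heG, heS⟩
        · rw [Sym2.map_pair_eq]
          exact Sym2.mem_mk_left _ _
    · rintro ⟨e, heS, rfl⟩
      refine ⟨⟨e, hsub heS, rfl⟩, ?_⟩
      rintro ⟨hmem, -⟩
      revert heS hmem
      induction e using Sym2.ind with
      | _ a b =>
        intro heS hmem
        rw [Sym2.map_pair_eq] at hmem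
        exact ((hkey1 a b).mp hmem).2 heS
  have hAcard : (oldEdges n r G \ E1 n r H).ncard = t := by
    rw [hAset, Set.ncard_image_of_injective _ (Sym2.map.injective (Fin.castAdd_injective _ _)),
      hcard]
  have hBset : E1 n r H \ oldEdges n r G =
      (fun q : Fin n × Fin r => s(Fin.castAdd r q.1, Fin.natAdd n q.2)) ''
        {q : Fin n × Fin r | Bp S r q.1 (q.2 : ℕ)} := by
    ext x
    simp only [Set.mem_diff, E1, Set.mem_setOf_eq, oldEdges, Set.mem_image]
    constructor
    · rintro ⟨⟨hmem, i, hi⟩, hnot⟩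
      revert hmem hi hnot
      induction x using Sym2.ind with
      | _ p q =>
        intro hnot hmem hi
        rcases split_fin p with ⟨a, rfl⟩ | ⟨gc, rfl⟩ <;>
          rcases split_fin q with ⟨b, rfl⟩ | ⟨gd, rfl⟩
        · have hab := (hkey1 a b).mp hmem
          exact absurd ⟨s(a, b), G.mem_edgeSet.mpr hab.1, Sym2.map_pair_eq _ _ _⟩ hnot
        · exact ⟨(a, gd), (hkey2 a gd).mp hmem, rfl⟩
        · refine ⟨(b, gc), ?_, ?_⟩
          · apply (hkey2 b gc).mp
            rwa [Sym2.eq_swap] at hmem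
          · exact Sym2.eq_swap
        · rcases Sym2.mem_iff.mp hi with h | h
          · exact absurd h (castAdd_ne_natAdd i gc)
          · exact absurd h (castAdd_ne_natAdd i gd)
    · rintro ⟨⟨v, j⟩, hBp, rfl⟩
      refine ⟨⟨(hkey2 v j).mpr hBp, v, Sym2.mem_mk_left _ _⟩, ?_⟩
      rintro ⟨e, heG, heq⟩
      revert heq
      induction e using Sym2.ind with
      | _ a b =>
        intro heq
        rw [Sym2.map_pair_eq] at heq
        rcases Sym2.eq_iff.mp heq with ⟨h1, h2⟩ | ⟨h1, h2⟩
        · exact castAdd_ne_natAdd b j h2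
        · exact castAdd_ne_natAdd a j h1
  have hginj : Function.Injective
      (fun q : Fin n × Fin r => s(Fin.castAdd r q.1, Fin.natAdd n q.2)) := by
    rintro ⟨v, j⟩ ⟨v', j'⟩ h
    simp only at h
    rcases Sym2.eq_iff.mp h with ⟨h1, h2⟩ | ⟨h1, h2⟩
    · exact Prod.ext (Fin.castAdd_injective _ _ h1) (natAdd_injective h2)
    · exact absurd h1 (castAdd_ne_natAdd v j')
  have hBcard : (E1 n r H \ oldEdges n r G).ncard = 2 * t := by
    rw [hBset, Set.ncard_image_of_injective _ hginj, Qcard hM hdr]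
    omega
  refine ⟨⟨H, hext, hAcard, hBcard⟩, ?_⟩
  have hmem : (editCost n r G H : ℕ∞) ∈
      (fun H => (editCost n r G H : ℕ∞)) '' {H | IsExtension n r k G H} :=
    ⟨H, hext, rfl⟩
  have hle : editNumber n r k G ≤ (editCost n r G H : ℕ∞) := sInf_le hmem
  have hcost : editCost n r G H = 3 * t := by
    rw [editCost, hAcard, hBcard]
    omega
  calc editNumber n r k G ≤ (editCost n r G H : ℕ∞) := hle
    _ = ((3 * t : ℕ) : ℕ∞) := by rw [hcost]
end
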